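/- arXiv:2507.21497 — 2 statements merged into one kernel-verified Lean document; each statement's English description precedes it below -/
import Mathlib

section
/- Pathwise adjoint identity for the Euler–Maruyama discretization: in the Euler setting below, ⟨∇Φ(x_N), v_N⟩ + (Φ(x_N) − Φ^avg) ∑_{n=0}^{N−1} (α_n / σ(x_n)) ⟨ΔB_n, v_n⟩ = ⟨ν_0, v_0⟩ + ∑_{k=0}^{N−1} ⟨ν_{k+1}, δF_k Δt + δσ_k ΔB_k⟩. -/
open Matrix

/-- The gradient vector of a scalar function on `ℝ^M`, in the standard basis. -/
noncomputable def gradVec {M : ℕ} (g : (Fin M → ℝ) → ℝ) (x : Fin M → ℝ) : Fin M → ℝ :=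
  fun i => fderiv ℝ g x (Pi.single i 1)

/-- The Jacobian matrix of a map `ℝ^M → ℝ^M`, in the standard basis. -/
noncomputable def jac {M : ℕ} (F : (Fin M → ℝ) → (Fin M → ℝ)) (x : Fin M → ℝ) :
    Matrix (Fin M) (Fin M) ℝ :=
  Matrix.of fun i j => fderiv ℝ F x (Pi.single j 1) i

lemma vecMulVec_mulVec' {M : ℕ} (a b ν : Fin M → ℝ) :
    (vecMulVec a b).mulVec ν = (b ⬝ᵥ ν) • a := by
  funext i
  simp only [vecMulVec, mulVec, dotProduct, Matrix.of_apply, Pi.smul_apply, smul_eq_mul,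
    Finset.mul_sum, Finset.sum_mul]
  apply Finset.sum_congr rfl
  intro j _
  ring

/-- pathwise adjoint identity for the Euler–Maruyama
discretization.  With the damped tangent process
`v_{n+1} = v_n − α_n v_n Δt + ∇F(x_n) v_n Δt + δF_n Δt
            + (⟨∇σ(x_n), v_n⟩ + δσ_n) ΔB_n`
and the adjoint covector process `ν_N = ∇Φ(x_N)`,
`ν_k = ν_{k+1} − α_k ν_{k+1} Δt + (∇F(x_k)ᵀ Δt + ∇σ(x_k) ΔB_kᵀ) ν_{k+1}
        + (Φ(x_N) − Φ^avg)(α_k/σ(x_k)) ΔB_k`,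
one has
`⟨∇Φ(x_N), v_N⟩ + (Φ(x_N) − Φ^avg) ∑_{n<N} (α_n/σ(x_n)) ⟨ΔB_n, v_n⟩
  = ⟨ν_0, v_0⟩ + ∑_{k<N} ⟨ν_{k+1}, δF_k Δt + δσ_k ΔB_k⟩`. -/
theorem adjoint_path_kernel_euler_pathwise
    (M N : ℕ) (hM : 1 ≤ M) (hN : 1 ≤ N)
    (Δt : ℝ) (hΔt : 0 < Δt)
    (x ΔB : ℕ → Fin M → ℝ)
    (α : ℕ → ℝ)
    (F : (Fin M → ℝ) → (Fin M → ℝ)) (σ : (Fin M → ℝ) → ℝ)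
    (hF : ContDiff ℝ 1 F) (hσ : ContDiff ℝ 1 σ)
    (hσne : ∀ n < N, σ (x n) ≠ 0)
    (Φ : (Fin M → ℝ) → ℝ) (hΦ : Differentiable ℝ Φ)
    (Φavg : ℝ)
    (δF : ℕ → Fin M → ℝ) (δσ : ℕ → ℝ)
    (v ν : ℕ → Fin M → ℝ)
    (hv : ∀ n < N,
      v (n + 1) = v n - (α n * Δt) • v n + Δt • (jac F (x n)).mulVec (v n)
        + Δt • δF n + ((gradVec σ (x n)) ⬝ᵥ v n + δσ n) • ΔB n)
    (hνN : ν N = gradVec Φ (x N))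
    (hν : ∀ k < N,
      ν k = ν (k + 1) - (α k * Δt) • ν (k + 1)
        + (Δt • (jac F (x k))ᵀ + vecMulVec (gradVec σ (x k)) (ΔB k)).mulVec (ν (k + 1))
        + ((Φ (x N) - Φavg) * (α k / σ (x k))) • ΔB k) :
    gradVec Φ (x N) ⬝ᵥ v N
      + (Φ (x N) - Φavg) * ∑ n ∈ Finset.range N, (α n / σ (x n)) * (ΔB n ⬝ᵥ v n)
      = ν 0 ⬝ᵥ v 0
        + ∑ k ∈ Finset.range N, ν (k + 1) ⬝ᵥ (Δt • δF k + δσ k • ΔB k) := by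
  have step : ∀ k < N,
      ν (k + 1) ⬝ᵥ v (k + 1) - ν k ⬝ᵥ v k
        = ν (k + 1) ⬝ᵥ (Δt • δF k + δσ k • ΔB k)
          - ((Φ (x N) - Φavg) * (α k / σ (x k))) * (ΔB k ⬝ᵥ v k) := by
    intro k hk
    rw [hv k hk, hν k hk]
    simp only [dotProduct_add, dotProduct_sub, add_dotProduct, sub_dotProduct,
      dotProduct_smul, smul_dotProduct, Matrix.add_mulVec, Matrix.smul_mulVec,
      vecMulVec_mulVec', smul_eq_mul, Matrix.dotProduct_mulVec,
      Matrix.vecMul_transpose]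
    rw [Matrix.mulVec_transpose, dotProduct_comm (ΔB k)]
    ring
  have tele := Finset.sum_range_sub (fun k => ν k ⬝ᵥ v k) N
  have hsum : ∑ k ∈ Finset.range N, (ν (k+1) ⬝ᵥ v (k+1) - ν k ⬝ᵥ v k)
      = ∑ k ∈ Finset.range N, (ν (k + 1) ⬝ᵥ (Δt • δF k + δσ k • ΔB k)
          - ((Φ (x N) - Φavg) * (α k / σ (x k))) * (ΔB k ⬝ᵥ v k)) :=
    Finset.sum_congr rfl fun k hk => step k (Finset.mem_range.mp hk)
  rw [tele] at hsum
  rw [← hνN]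
  rw [Finset.sum_sub_distrib] at hsum
  have : (Φ (x N) - Φavg) * ∑ n ∈ Finset.range N, (α n / σ (x n)) * (ΔB n ⬝ᵥ v n)
      = ∑ k ∈ Finset.range N, ((Φ (x N) - Φavg) * (α k / σ (x k))) * (ΔB k ⬝ᵥ v k) := by
    rw [Finset.mul_sum]
    apply Finset.sum_congr rfl
    intro j _
    ring
  rw [this]; linarith [hsum]
end

section
/- Pathwise adjoint identity for the discretized infinite-time (ergodic) path-kernel formula: in the windowed Euler setting below, with zero initial tangent condition v_0 = 0 and zero terminal adjoint condition ν_N = 0, one has ∑_{n=0}^{N−1} ⟨ξ_n, v_n⟩ Δt = ∑_{k=0}^{N−1} ⟨ν_{k+1}, p_{k+1}⟩, where for 0 ≤ n ≤ N−1, ξ_n := ∇Φ(x_n) + (α_n / σ(x_n)) (∑_{m=1}^{N_W} (Φ(x_{n+m}) − Φ^avg)) ΔB_n and p_{n+1} := δF_n Δt + δσ_n ΔB_n. -/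
open Matrix

lemma vecMulVec_mulVec_eq {M : ℕ} (g b W : Fin M → ℝ) :
    (Matrix.vecMulVec g b).mulVec W = (b ⬝ᵥ W) • g := by
  funext i
  simp [Matrix.vecMulVec, Matrix.mulVec, dotProduct, Finset.mul_sum, Finset.sum_mul]
  exact Finset.sum_congr rfl fun j _ => by ring

/-- pathwise adjoint identity for the discretized
infinite-time (ergodic) path-kernel formula.  With
`ξ_n := ∇Φ(x_n) + (α_n/σ(x_n)) (∑_{m=1}^{N_W} (Φ(x_{n+m}) − Φ^avg)) ΔB_n`,
`p_{n+1} := δF_n Δt + δσ_n ΔB_n`,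
the damped tangent process `v_0 = 0`,
`v_{n+1} = v_n − α_n v_n Δt + ∇F(x_n) v_n Δt + ⟨∇σ(x_n), v_n⟩ ΔB_n + p_{n+1}`,
and the adjoint covector process `ν_N = 0`,
`ν_k = ν_{k+1} − α_k ν_{k+1} Δt + (∇F(x_k)ᵀ Δt + ∇σ(x_k) ΔB_kᵀ) ν_{k+1} + ξ_k Δt`,
one has `∑_{n<N} ⟨ξ_n, v_n⟩ Δt = ∑_{k<N} ⟨ν_{k+1}, p_{k+1}⟩`. -/
theorem adjoint_path_kernel_ergodic_pathwise
    (M N NW : ℕ) (hM : 1 ≤ M) (hN : 1 ≤ N) (hNW : 1 ≤ NW)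
    (Δt : ℝ) (hΔt : 0 < Δt)
    (x ΔB : ℕ → Fin M → ℝ)
    (α : ℕ → ℝ)
    (F : (Fin M → ℝ) → (Fin M → ℝ)) (σ : (Fin M → ℝ) → ℝ)
    (hF : ContDiff ℝ 1 F) (hσ : ContDiff ℝ 1 σ)
    (hσne : ∀ n < N, σ (x n) ≠ 0)
    (Φ : (Fin M → ℝ) → ℝ) (hΦ : Differentiable ℝ Φ)
    (Φavg : ℝ)
    (δF : ℕ → Fin M → ℝ) (δσ : ℕ → ℝ)
    (ξ p : ℕ → Fin M → ℝ)
    (hξ : ∀ n < N,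
      ξ n = gradVec Φ (x n)
        + ((α n / σ (x n)) * ∑ m ∈ Finset.Icc 1 NW, (Φ (x (n + m)) - Φavg)) • ΔB n)
    (hp : ∀ n < N, p (n + 1) = Δt • δF n + δσ n • ΔB n)
    (v ν : ℕ → Fin M → ℝ)
    (hv0 : v 0 = 0)
    (hv : ∀ n < N,
      v (n + 1) = v n - (α n * Δt) • v n + Δt • (jac F (x n)).mulVec (v n)
        + ((gradVec σ (x n)) ⬝ᵥ v n) • ΔB n + p (n + 1))
    (hνN : ν N = 0)
    (hν : ∀ k < N,
      ν k = ν (k + 1) - (α k * Δt) • ν (k + 1)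
        + (Δt • (jac F (x k))ᵀ + vecMulVec (gradVec σ (x k)) (ΔB k)).mulVec (ν (k + 1))
        + Δt • ξ k) :
    ∑ n ∈ Finset.range N, (ξ n ⬝ᵥ v n) * Δt
      = ∑ k ∈ Finset.range N, ν (k + 1) ⬝ᵥ p (k + 1) := by
  have key : ∀ k < N, ν (k+1) ⬝ᵥ v (k+1) - ν k ⬝ᵥ v k
      = ν (k+1) ⬝ᵥ p (k+1) - (ξ k ⬝ᵥ v k) * Δt := by
    intro k hk
    rw [hν k hk, hv k hk]
    simp only [Matrix.add_mulVec, vecMulVec_mulVec_eq, dotProduct_add,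
      add_dotProduct, dotProduct_sub, sub_dotProduct,
      dotProduct_smul, smul_dotProduct, smul_eq_mul,
      Matrix.smul_mulVec, Matrix.dotProduct_mulVec, Matrix.mulVec_transpose,
      dotProduct_comm (ΔB k)]
    ring
  have tele := Finset.sum_range_sub (fun k => ν k ⬝ᵥ v k) N
  have hsum : ∑ k ∈ Finset.range N,
      (ν (k+1) ⬝ᵥ v (k+1) - ν k ⬝ᵥ v k)
      = ∑ k ∈ Finset.range N, (ν (k+1) ⬝ᵥ p (k+1) - (ξ k ⬝ᵥ v k) * Δt) :=
    Finset.sum_congr rfl fun k hk => key k (Finset.mem_range.mp hk)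
  rw [tele, hνN, hv0] at hsum
  simp only [zero_dotProduct, dotProduct_zero, sub_zero] at hsum
  rw [Finset.sum_sub_distrib] at hsum
  linarith
end
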